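/- For any t ∈ K, the map x ↦ θ(x)·x² (i.e. x^{θ+2}) and the map x ↦ x²/θ(x) (i.e. x^{2−θ}) are mutually inverse bijections of K*; equivalently, if a, u ∈ K* satisfy a²·θ(u)^{−1} = θ(a)^{−1}·u², then a = u. -/

import Mathlib

/-- The maps `x ↦ x^{θ+2} = θ(x)·x²` and `x ↦ x^{2−θ} = x²/θ(x)` are mutually inverse
bijections of `K*`; equivalently, `a²·θ(u)⁻¹ = θ(a)⁻¹·u²` implies `a = u`. -/
theorem stmt15 {K : Type*} [Field K] [CharP K 3] (θ : K →+* K)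
    (hθ : ∀ x : K, θ (θ x) = x ^ 3) :
    (∀ x : K, x ≠ 0 → (θ x * x ^ 2) ^ 2 / θ (θ x * x ^ 2) = x) ∧
    (∀ x : K, x ≠ 0 → θ (x ^ 2 / θ x) * (x ^ 2 / θ x) ^ 2 = x) ∧
    (∀ a u : K, a ≠ 0 → u ≠ 0 → a ^ 2 * (θ u)⁻¹ = (θ a)⁻¹ * u ^ 2 → a = u) := by
  have hθ0 : ∀ x : K, x ≠ 0 → θ x ≠ 0 := fun x hx h => hx (by
    have := hθ x
    rw [h, map_zero] at this
    exact pow_eq_zero_iff (n := 3) (by norm_num) |>.mp this.symm)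
  have h1 : ∀ x : K, x ≠ 0 → (θ x * x ^ 2) ^ 2 / θ (θ x * x ^ 2) = x := by
    intro x hx
    have hx3 : x ^ 3 ≠ 0 := pow_ne_zero _ hx
    have hθx : θ x ≠ 0 := hθ0 x hx
    rw [map_mul, map_pow, hθ]
    field_simp
  refine ⟨h1, ?_, ?_⟩
  · intro x hx
    have hθx : θ x ≠ 0 := hθ0 x hx
    have hθθx : θ (θ x) ≠ 0 := hθ0 _ hθx
    rw [map_div₀, map_pow, hθ]
    have hx3 : x ^ 3 ≠ 0 := pow_ne_zero _ hx
    field_simp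
  · intro a u ha hu h
    have hθa : θ a ≠ 0 := hθ0 a ha
    have hθu : θ u ≠ 0 := hθ0 u hu
    have key : θ a * a ^ 2 = θ u * u ^ 2 := by
      field_simp at h
      linear_combination h
    calc a = (θ a * a ^ 2) ^ 2 / θ (θ a * a ^ 2) := (h1 a ha).symm
      _ = (θ u * u ^ 2) ^ 2 / θ (θ u * u ^ 2) := by rw [key]
      _ = u := h1 u hu
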